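/- Let f : ℝⁿ → ℝⁿ be continuous with a pseudo-Jacobian map Jf, and suppose for some x ∈ ℝⁿ and β > 0 that α_{Jf}(x, β) := inf{//A// : A ∈ co(Jf(x + β𝐁ₙ))} > 0. Then ‖f(x + h) − f(x)‖ ≥ α_{Jf}(x, β)·‖h‖ for all h with ‖h‖ < β. -/

import Mathlib

open Pointwise

noncomputable def conorm {n : ℕ}
    (A : EuclideanSpace ℝ (Fin n) →L[ℝ] EuclideanSpace ℝ (Fin n)) : ℝ :=
  sInf ((fun u => ‖A u‖) '' {u | ‖u‖ = 1})

noncomputable def regIndexBall {n : ℕ}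
    (Jf : EuclideanSpace ℝ (Fin n) →
      Set (EuclideanSpace ℝ (Fin n) →L[ℝ] EuclideanSpace ℝ (Fin n)))
    (x : EuclideanSpace ℝ (Fin n)) (β : ℝ) : ℝ :=
  sInf (conorm '' (convexHull ℝ (⋃ y ∈ Metric.ball x β, Jf y)))

/-- `J` is a pseudo-Jacobian of `f` at `x`: a nonempty closed set of linear maps such
that the upper Dini directional derivative of `v ∘ f` at `x` in direction `u` is at most
`sup_{M ∈ J} ⟨v, M u⟩`, for all `u`, `v`. -/
def IsPseudoJacobian {n m : ℕ}
    (f : EuclideanSpace ℝ (Fin n) → EuclideanSpace ℝ (Fin m))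
    (J : Set (EuclideanSpace ℝ (Fin n) →L[ℝ] EuclideanSpace ℝ (Fin m)))
    (x : EuclideanSpace ℝ (Fin n)) : Prop :=
  J.Nonempty ∧ IsClosed J ∧
    ∀ (u : EuclideanSpace ℝ (Fin n)) (v : EuclideanSpace ℝ (Fin m)),
      Filter.limsup
        (fun t : ℝ =>
          ((((inner ℝ v (f (x + t • u)) : ℝ) - (inner ℝ v (f x) : ℝ)) / t : ℝ) : EReal))
        (nhdsWithin 0 (Set.Ioi 0))
      ≤ ⨆ M ∈ J, ((inner ℝ v (M u) : ℝ) : EReal)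

/-- scalar MVT from frequent-slope bound -/
lemma mvt_scalar {g : ℝ → ℝ} {c : ℝ} (hg : ContinuousOn g (Set.Icc 0 1))
    (hd : ∀ t ∈ Set.Ico (0:ℝ) 1, ∀ r, c < r → ∃ᶠ z in nhdsWithin t (Set.Ioi t),
      slope g t z < r) : g 1 ≤ g 0 + c := by
  have := image_le_of_liminf_slope_right_le_deriv_boundary (B := fun t => g 0 + c * t)
    (B' := fun _ => c) hg (by simp)
    (by fun_prop)
    (fun t _ => ((hasDerivWithinAt_id t (Set.Ici t)).const_mul c).const_add (g 0) |>.congr_deriv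
      (by ring))
    hd (Set.right_mem_Icc.2 zero_le_one)
  simpa using this

theorem norm_sub_ge_of_regIndexBall_pos {n : ℕ}
    (f : EuclideanSpace ℝ (Fin n) → EuclideanSpace ℝ (Fin n)) (hf : Continuous f)
    (Jf : EuclideanSpace ℝ (Fin n) →
      Set (EuclideanSpace ℝ (Fin n) →L[ℝ] EuclideanSpace ℝ (Fin n)))
    (hJf : ∀ y, IsPseudoJacobian f (Jf y) y)
    (x : EuclideanSpace ℝ (Fin n)) (β : ℝ) (hβ : 0 < β)
    (hα : 0 < regIndexBall Jf x β) :
    ∀ h : EuclideanSpace ℝ (Fin n), ‖h‖ < β →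
      ‖f (x + h) - f x‖ ≥ regIndexBall Jf x β * ‖h‖ := by
  intro h hh
  rcases eq_or_ne h 0 with rfl | hne
  · simp [mul_nonneg hα.le]
  set α := regIndexBall Jf x β with hαdef
  set S : Set (EuclideanSpace ℝ (Fin n) →L[ℝ] EuclideanSpace ℝ (Fin n)) :=
    ⋃ y ∈ Metric.ball x β, Jf y with hS
  set T : Set (EuclideanSpace ℝ (Fin n)) :=
    (fun A : EuclideanSpace ℝ (Fin n) →L[ℝ] EuclideanSpace ℝ (Fin n) => A h) '' S with hT
  set C : Set (EuclideanSpace ℝ (Fin n)) := closure (convexHull ℝ T) with hC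
  -- step 1: f (x+h) - f x ∈ C
  have hmem : f (x + h) - f x ∈ C := by
    by_contra hd
    obtain ⟨φ, c, hφ1, hφ2⟩ := geometric_hahn_banach_closed_point
      (convex_convexHull ℝ T).closure isClosed_closure hd
    set v : EuclideanSpace ℝ (Fin n) :=
      (InnerProductSpace.toDual ℝ (EuclideanSpace ℝ (Fin n))).symm φ with hv
    have hvw : ∀ w : EuclideanSpace ℝ (Fin n), (inner ℝ v w : ℝ) = φ w := fun w =>
      InnerProductSpace.toDual_symm_apply
    set g : ℝ → ℝ := fun t => (inner ℝ v (f (x + t • h)) : ℝ) with hg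
    have hgc : ContinuousOn g (Set.Icc 0 1) := by
      apply Continuous.continuousOn
      exact continuous_const.inner
        (hf.comp (continuous_const.add (continuous_id.smul continuous_const)))
    have key : g 1 ≤ g 0 + c := by
      refine mvt_scalar hgc ?_
      intro t₀ ht₀ r hr
      have hyball : x + t₀ • h ∈ Metric.ball x β := by
        rw [Metric.mem_ball, dist_eq_norm]
        simp only [add_sub_cancel_left, norm_smul, Real.norm_eq_abs,
          abs_of_nonneg ht₀.1]
        calc t₀ * ‖h‖ ≤ 1 * ‖h‖ :=
              mul_le_mul_of_nonneg_right ht₀.2.le (norm_nonneg _)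
          _ < β := by simpa using hh
      have hlim := (hJf (x + t₀ • h)).2.2 h v
      have hsup : (⨆ M ∈ Jf (x + t₀ • h), ((inner ℝ v (M h) : ℝ) : EReal)) ≤ (c : EReal) := by
        refine iSup₂_le fun M hM => ?_
        have hMC : M h ∈ C :=
          subset_closure (subset_convexHull ℝ T
            ⟨M, Set.mem_biUnion hyball hM, rfl⟩)
        have : (inner ℝ v (M h) : ℝ) ≤ c := by rw [hvw]; exact (hφ1 _ hMC).le
        exact_mod_cast this
      have hcr : ((c : ℝ) : EReal) < ((r : ℝ) : EReal) := by exact_mod_cast hr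
      have hev : ∀ᶠ t in nhdsWithin (0:ℝ) (Set.Ioi 0),
          ((inner ℝ v (f (x + t₀ • h + t • h)) : ℝ) - (inner ℝ v (f (x + t₀ • h)) : ℝ)) / t < r := by
        have := Filter.eventually_lt_of_limsup_lt (lt_of_le_of_lt (hlim.trans hsup) hcr)
        filter_upwards [this] with t ht
        exact_mod_cast ht
      have htend : Filter.Tendsto (fun z => z - t₀) (nhdsWithin t₀ (Set.Ioi t₀))
          (nhdsWithin 0 (Set.Ioi 0)) := by
        apply Filter.Tendsto.inf
        · have : Filter.Tendsto (fun z : ℝ => z - t₀) (nhds t₀) (nhds (t₀ - t₀)) :=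
            (continuous_id.sub continuous_const).tendsto t₀
          simpa using this
        · apply Filter.tendsto_principal_principal.2
          intro z hz
          simpa [Set.mem_Ioi, sub_pos] using hz
      have hfreq := (htend.eventually hev).frequently
      refine hfreq.mono fun z hz => ?_
      have hz1 : x + t₀ • h + (z - t₀) • h = x + z • h := by
        rw [sub_smul]; abel
      rw [hz1] at hz
      rw [slope_def_field]
      simpa [hg] using hz
    have hle : φ (f (x + h) - f x) ≤ c := by
      have h1 : g 1 = (inner ℝ v (f (x + h)) : ℝ) := by simp [hg]
      have h0 : g 0 = (inner ℝ v (f x) : ℝ) := by simp [hg]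
      rw [map_sub, ← hvw, ← hvw, ← h1, ← h0]
      linarith
    exact absurd hφ2 (not_lt.2 hle)
  -- step 2: everything in C has norm ≥ α * ‖h‖
  have hbound : ∀ z ∈ C, α * ‖h‖ ≤ ‖z‖ := by
    have hcl : IsClosed {z : EuclideanSpace ℝ (Fin n) | α * ‖h‖ ≤ ‖z‖} :=
      isClosed_le continuous_const continuous_norm
    intro z hz
    refine hcl.closure_subset_iff.2 ?_ hz
    intro w hw
    have himg : convexHull ℝ T
        = (fun A : EuclideanSpace ℝ (Fin n) →L[ℝ] EuclideanSpace ℝ (Fin n) => A h) ''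
          convexHull ℝ S := by
      have := (ContinuousLinearMap.apply ℝ (EuclideanSpace ℝ (Fin n)) h).toLinearMap.image_convexHull S
      exact this.symm
    rw [himg] at hw
    obtain ⟨A, hA, rfl⟩ := hw
    have hconorm : α ≤ conorm A := by
      apply csInf_le
      · refine ⟨0, ?_⟩
        rintro r ⟨B, -, rfl⟩
        exact Real.sInf_nonneg (by rintro s ⟨u, -, rfl⟩; positivity)
      · exact ⟨A, hA, rfl⟩
    have hpos : (0:ℝ) < ‖h‖ := norm_pos_iff.2 hne
    have hu : ‖(‖h‖⁻¹ • h : EuclideanSpace ℝ (Fin n))‖ = 1 := by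
      rw [norm_smul, norm_inv, norm_norm, inv_mul_cancel₀ hpos.ne']
    have h2 : conorm A ≤ ‖A (‖h‖⁻¹ • h)‖ := by
      apply csInf_le
      · refine ⟨0, ?_⟩
        rintro s ⟨u, -, rfl⟩
        positivity
      · exact ⟨_, hu, rfl⟩
    have h3 : ‖A (‖h‖⁻¹ • h)‖ = ‖h‖⁻¹ * ‖A h‖ := by
      rw [map_smul, norm_smul, norm_inv, norm_norm]
    calc α * ‖h‖ ≤ conorm A * ‖h‖ := mul_le_mul_of_nonneg_right hconorm hpos.le
      _ ≤ (‖h‖⁻¹ * ‖A h‖) * ‖h‖ := by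
          rw [← h3]; exact mul_le_mul_of_nonneg_right h2 hpos.le
      _ = ‖A h‖ := by field_simp
  exact hbound _ hmem
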